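/- arXiv:1209.6498 — 2 statements merged into one kernel-verified Lean document; each statement's English description precedes it below -/
import Mathlib

section
/- (Pólya–Vinogradov inequality) For any integer n > 1, any non-principal Dirichlet character χ modulo n, and any positive integer h, |∑_{k=1}^{h} χ(k)| ≤ 2√n · log n. -/
open Finset

open Complex ZMod DirichletCharacter in
lemma pv_conj_stdAddChar {m : ℕ} [NeZero m] (a : ZMod m) :
    (starRingEnd ℂ) (ZMod.stdAddChar a) = ZMod.stdAddChar (-a) := by
  rw [ZMod.stdAddChar_apply, ZMod.stdAddChar_apply, AddChar.map_neg_eq_inv,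
    ← Circle.coe_inv_eq_conj]

open Complex ZMod DirichletCharacter in
lemma pv_gauss_abs {m : ℕ} [NeZero m] {χ : DirichletCharacter ℂ m} (hχ : χ.IsPrimitive) :
    ‖gaussSum χ ZMod.stdAddChar‖ = Real.sqrt m := by
  have key : gaussSum χ ZMod.stdAddChar * (starRingEnd ℂ) (gaussSum χ ZMod.stdAddChar)
      = (m : ℂ) := by
    have h2 := congrFun (ZMod.dft_dft (χ : ZMod m → ℂ)) (-1)
    rw [ZMod.dft_apply] at h2
    simp only [hχ.fourierTransform_eq_inv_mul_gaussSum, smul_eq_mul, neg_neg, map_one,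
      mul_neg_one, mul_one, nsmul_eq_mul] at h2
    have hconj : (starRingEnd ℂ) (gaussSum χ ZMod.stdAddChar)
        = ∑ j : ZMod m, χ⁻¹ (-j) * ZMod.stdAddChar j := by
      rw [gaussSum, map_sum]
      refine Fintype.sum_equiv (Equiv.neg _) _ _ fun j => ?_
      rw [Equiv.neg_apply, map_mul, pv_conj_stdAddChar, neg_neg, ← MulChar.star_apply']
      rfl
    calc gaussSum χ ZMod.stdAddChar * (starRingEnd ℂ) (gaussSum χ ZMod.stdAddChar)
        = ∑ j : ZMod m, ZMod.stdAddChar j * (χ⁻¹ (-j) * gaussSum χ ZMod.stdAddChar) := by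
          rw [hconj, Finset.mul_sum]
          exact Finset.sum_congr rfl fun j _ => by ring
      _ = (m : ℂ) := h2
  have h3 : Complex.normSq (gaussSum χ ZMod.stdAddChar) = (m : ℝ) := by
    have := key
    rw [Complex.mul_conj] at this
    exact_mod_cast this
  rw [Complex.norm_def, h3]

open Complex ZMod DirichletCharacter in
lemma pv_geom_bound {z : ℂ} (hz1 : ‖z‖ = 1) (hz : z ≠ 1) (h : ℕ) :
    ‖∑ k ∈ Finset.Icc 1 h, z ^ k‖ ≤ 2 / ‖z - 1‖ := by
  have hd : 0 < ‖z - 1‖ := by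
    rw [norm_pos_iff]
    exact sub_ne_zero.mpr hz
  have h1 : ∑ k ∈ Finset.Icc 1 h, z ^ k = (z ^ (h + 1) - z ^ 1) / (z - 1) := by
    rw [← Finset.Ico_add_one_right_eq_Icc, geom_sum_Ico hz (by omega)]
  rw [h1, norm_div]
  have h2 : ‖z ^ (h + 1) - z ^ 1‖ ≤ 2 := by
    calc ‖z ^ (h + 1) - z ^ 1‖
        ≤ ‖z ^ (h + 1)‖ + ‖z ^ 1‖ := by
          exact norm_sub_le _ _
      _ = 2 := by rw [norm_pow, norm_pow, hz1]; norm_num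
  gcongr

lemma pv_abs_exp_sub_one (θ : ℝ) :
    ‖Complex.exp (θ * Complex.I) - 1‖ = 2 * |Real.sin (θ / 2)| := by
  rw [Complex.exp_mul_I]
  have h1 : Complex.cos θ + Complex.sin θ * Complex.I - 1
      = ((Real.cos θ - 1 : ℝ) : ℂ) + (Real.sin θ : ℝ) * Complex.I := by
    push_cast [← Complex.ofReal_cos, ← Complex.ofReal_sin]
    ring
  rw [h1, Complex.norm_add_mul_I, Real.abs_sin_half]
  have h2 : (Real.cos θ - 1) ^ 2 + Real.sin θ ^ 2 = 4 * ((1 - Real.cos θ) / 2) := by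
    have := Real.sin_sq_add_cos_sq θ
    ring_nf
    nlinarith [this]
  rw [h2, show (4 : ℝ) * ((1 - Real.cos θ) / 2) = 2 ^ 2 * ((1 - Real.cos θ) / 2) by norm_num,
    Real.sqrt_mul (by positivity), Real.sqrt_sq (by norm_num)]

lemma pv_expsum_bound {m : ℕ} [NeZero m] (hm : 2 ≤ m) {a : ZMod m} (ha : a ≠ 0) (h : ℕ) :
    ‖∑ k ∈ Finset.Icc 1 h, ZMod.stdAddChar (a * (k : ZMod m))‖ ≤
      (m : ℝ) / (2 * min (a.val : ℝ) ((m : ℝ) - a.val)) := by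
  have hm0 : (0 : ℝ) < m := by positivity
  set t := a.val with ht
  have htm : t < m := a.val_lt
  have ht1 : 1 ≤ t := by
    rcases Nat.eq_zero_or_pos t with h0 | h1
    · exact absurd ((ZMod.val_eq_zero a).mp h0) ha
    · exact h1
  set z := ZMod.stdAddChar a with hzdef
  have hz1 : ‖z‖ = 1 := by
    rw [hzdef, ZMod.stdAddChar_apply]; exact Circle.norm_coe _
  have hzne : z ≠ 1 := by
    intro hz
    refine ha (ZMod.injective_stdAddChar (N := m) ?_)
    rw [AddChar.map_zero_eq_one]
    exact hz
  have hsummand : ∀ k : ℕ, ZMod.stdAddChar (a * (k : ZMod m)) = z ^ k := by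
    intro k
    rw [show a * (k : ZMod m) = (k : ℕ) • a by rw [nsmul_eq_mul, mul_comm],
      AddChar.map_nsmul_eq_pow]
  have hz2 : z = Complex.exp ((2 * Real.pi * t / m : ℝ) * Complex.I) := by
    rw [hzdef, ZMod.stdAddChar_apply, ZMod.toCircle_apply]
    congr 1
    push_cast
    ring
  -- sin lower bound claim
  have claim : ∀ s : ℕ, 1 ≤ s → 2 * (s : ℝ) ≤ m → 2 * (s : ℝ) / m ≤ Real.sin (Real.pi * s / m) := by
    intro s hs1 hs2
    have h1 : 0 ≤ Real.pi * s / m := by positivity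
    have h2 : Real.pi * s / m ≤ Real.pi / 2 := by
      rw [div_le_div_iff₀ hm0 two_pos]
      nlinarith [Real.pi_pos]
    have h3 := Real.mul_le_sin h1 h2
    calc 2 * (s : ℝ) / m = 2 / Real.pi * (Real.pi * s / m) := by
          field_simp
      _ ≤ Real.sin (Real.pi * s / m) := h3
  have hsin : 2 * min (t : ℝ) ((m : ℝ) - t) / m ≤ Real.sin (Real.pi * t / m) := by
    rcases le_or_gt (t : ℝ) ((m : ℝ) - t) with hc | hc
    · rw [min_eq_left hc]
      exact claim t ht1 (by linarith)
    · rw [min_eq_right hc.le, ← Real.sin_pi_sub]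
      have hsub : Real.pi - Real.pi * t / m = Real.pi * (m - t : ℕ) / m := by
        have hc2 : ((m - t : ℕ) : ℝ) = (m : ℝ) - t := by
          push_cast [Nat.cast_sub htm.le]; ring
        rw [hc2]
        field_simp
      rw [hsub]
      have hc2 : ((m - t : ℕ) : ℝ) = (m : ℝ) - t := by
        push_cast [Nat.cast_sub htm.le]; ring
      rw [← hc2]
      refine claim (m - t) (by omega) (by rw [hc2]; linarith)
  have hsinpos : 0 < Real.sin (Real.pi * t / m) := by
    apply Real.sin_pos_of_pos_of_lt_pi
    · positivity
    · rw [div_lt_iff₀ hm0]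
      have : (t : ℝ) < m := by exact_mod_cast htm
      nlinarith [Real.pi_pos]
  have habs : ‖z - 1‖ = 2 * Real.sin (Real.pi * t / m) := by
    rw [hz2, pv_abs_exp_sub_one, show (2 * Real.pi * t / m) / 2 = Real.pi * t / m by ring,
      abs_of_pos hsinpos]
  have hminpos : (0 : ℝ) < min (t : ℝ) ((m : ℝ) - t) := by
    have h1 : (1 : ℝ) ≤ t := by exact_mod_cast ht1
    have h2 : (t : ℝ) + 1 ≤ m := by exact_mod_cast htm
    rcases min_cases (t : ℝ) ((m : ℝ) - t) with ⟨hh, _⟩ | ⟨hh, _⟩ <;> rw [hh] <;> linarith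
  calc ‖∑ k ∈ Finset.Icc 1 h, ZMod.stdAddChar (a * (k : ZMod m))‖
      = ‖∑ k ∈ Finset.Icc 1 h, z ^ k‖ := by
        congr 1; exact Finset.sum_congr rfl fun k _ => hsummand k
    _ ≤ 2 / ‖z - 1‖ := pv_geom_bound hz1 hzne h
    _ = 2 / (2 * Real.sin (Real.pi * t / m)) := by rw [habs]
    _ ≤ (m : ℝ) / (2 * min (t : ℝ) ((m : ℝ) - t)) := by
        rw [div_le_div_iff₀ (by positivity) (by positivity)]
        have h4 : 2 * min (t : ℝ) ((m : ℝ) - t) ≤ Real.sin (Real.pi * t / m) * m :=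
          (div_le_iff₀ hm0).mp hsin
        nlinarith

lemma pv_min_sum_bound {m : ℕ} (hm : 2 ≤ m) :
    ∑ t ∈ Finset.Ioc 0 (m - 1), (1 : ℝ) / (min (t : ℝ) ((m : ℝ) - t)) ≤
      2 * (1 + Real.log m - Real.log 2) := by
  set M := m / 2 with hM
  have hM1 : 1 ≤ M := by omega
  have hMle : M ≤ m - 1 := by omega
  have hsplit := Finset.sum_Ioc_consecutive
    (f := fun t : ℕ => (1 : ℝ) / (min (t : ℝ) ((m : ℝ) - t))) (Nat.zero_le M) hMle
  have hharm : ∑ t ∈ Finset.Ioc 0 M, (1 : ℝ) / (t : ℝ) = (harmonic M : ℝ) := by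
    rw [harmonic_eq_sum_Icc]
    push_cast
    rw [show Finset.Icc 1 M = Finset.Ioc 0 M from Finset.Icc_add_one_left_eq_Ioc 0 M]
    exact Finset.sum_congr rfl fun t _ => (one_div _)
  have part1 : ∑ t ∈ Finset.Ioc 0 M, (1 : ℝ) / (min (t : ℝ) ((m : ℝ) - t))
      = (harmonic M : ℝ) := by
    rw [← hharm]
    refine Finset.sum_congr rfl fun t ht => ?_
    rw [Finset.mem_Ioc] at ht
    have h2t : 2 * t ≤ m := by omega
    have : (t : ℝ) ≤ (m : ℝ) - t := by
      have : 2 * (t : ℝ) ≤ m := by exact_mod_cast h2t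
      linarith
    rw [min_eq_left this]
  have part2 : ∑ t ∈ Finset.Ioc M (m - 1), (1 : ℝ) / (min (t : ℝ) ((m : ℝ) - t))
      ≤ (harmonic M : ℝ) := by
    have heq : ∑ t ∈ Finset.Ioc M (m - 1), (1 : ℝ) / (min (t : ℝ) ((m : ℝ) - t))
        = ∑ s ∈ Finset.Ioc 0 (m - 1 - M), (1 : ℝ) / (s : ℝ) := by
      refine Finset.sum_nbij' (fun t => m - t) (fun s => m - s) ?_ ?_ ?_ ?_ ?_
      · intro t ht; simp only [Finset.mem_Ioc] at ht ⊢; omega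
      · intro s hs; simp only [Finset.mem_Ioc] at hs ⊢; omega
      · intro t ht; simp only [Finset.mem_Ioc] at ht ⊢; omega
      · intro s hs; simp only [Finset.mem_Ioc] at hs ⊢; omega
      · intro t ht
        rw [Finset.mem_Ioc] at ht
        have h2t : m + 1 ≤ 2 * t := by omega
        have hcast : ((m - t : ℕ) : ℝ) = (m : ℝ) - t := by
          have : t ≤ m := by omega
          push_cast [Nat.cast_sub this]; ring
        have : (m : ℝ) - t ≤ (t : ℝ) := by
          have : (m : ℝ) + 1 ≤ 2 * t := by exact_mod_cast h2t
          linarith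
        rw [min_eq_right this, hcast]
    rw [heq, ← hharm]
    refine Finset.sum_le_sum_of_subset_of_nonneg ?_ ?_
    · apply Finset.Ioc_subset_Ioc le_rfl; omega
    · intro i _ _; positivity
  have hlogM : Real.log M ≤ Real.log m - Real.log 2 := by
    rw [← Real.log_div (by positivity) (by norm_num)]
    apply Real.log_le_log (by positivity)
    exact_mod_cast Nat.cast_div_le
  have hharmle : (harmonic M : ℝ) ≤ 1 + Real.log M := harmonic_le_one_add_log M
  calc ∑ t ∈ Finset.Ioc 0 (m - 1), (1 : ℝ) / (min (t : ℝ) ((m : ℝ) - t))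
      = ∑ t ∈ Finset.Ioc 0 M, (1 : ℝ) / (min (t : ℝ) ((m : ℝ) - t))
        + ∑ t ∈ Finset.Ioc M (m - 1), (1 : ℝ) / (min (t : ℝ) ((m : ℝ) - t)) := hsplit.symm
    _ ≤ (harmonic M : ℝ) + (harmonic M : ℝ) := by rw [part1]; linarith
    _ ≤ 2 * (1 + Real.log M) := by linarith
    _ ≤ 2 * (1 + Real.log m - Real.log 2) := by linarith

open Complex ZMod DirichletCharacter in
lemma pv_primitive {m : ℕ} [NeZero m] (hm : 2 ≤ m) {χ : DirichletCharacter ℂ m}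
    (hχ : χ.IsPrimitive) (h : ℕ) :
    ‖∑ k ∈ Finset.Icc 1 h, χ (k : ZMod m)‖ ≤
      Real.sqrt m * (1 + Real.log m - Real.log 2) := by
  classical
  have hm0 : (0 : ℝ) < m := by positivity
  have hmne : (m : ℂ) ≠ 0 := by exact_mod_cast (by omega : m ≠ 0)
  haveI : Nontrivial (ZMod m) := ZMod.nontrivial_iff.mpr (by omega)
  set T := gaussSum χ ZMod.stdAddChar with hT
  have habsT : ‖T‖ = Real.sqrt m := pv_gauss_abs hχ
  have hone : ∀ k : ZMod m, χ k
      = (m : ℂ)⁻¹ * ∑ a : ZMod m, ZMod.stdAddChar (a * k) * (χ⁻¹ (-a) * T) := by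
    intro k
    have e1 : (χ : ZMod m → ℂ) k = ZMod.dft.symm (ZMod.dft (χ : ZMod m → ℂ)) k := by
      rw [LinearEquiv.symm_apply_apply]
    rw [e1, ZMod.invDFT_apply]
    simp only [smul_eq_mul, hχ.fourierTransform_eq_inv_mul_gaussSum]
    rw [hT]
  have hS : ∑ k ∈ Finset.Icc 1 h, χ (k : ZMod m)
      = (m : ℂ)⁻¹ * ∑ a : ZMod m, (χ⁻¹ (-a) * T) *
          ∑ k ∈ Finset.Icc 1 h, ZMod.stdAddChar (a * (k : ZMod m)) := by
    calc ∑ k ∈ Finset.Icc 1 h, χ (k : ZMod m)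
        = ∑ k ∈ Finset.Icc 1 h, ((m : ℂ)⁻¹ *
            ∑ a : ZMod m, ZMod.stdAddChar (a * (k : ZMod m)) * (χ⁻¹ (-a) * T)) :=
          Finset.sum_congr rfl fun k _ => hone (k : ZMod m)
      _ = (m : ℂ)⁻¹ * ∑ k ∈ Finset.Icc 1 h,
            ∑ a : ZMod m, ZMod.stdAddChar (a * (k : ZMod m)) * (χ⁻¹ (-a) * T) :=
          (Finset.mul_sum _ _ _).symm
      _ = (m : ℂ)⁻¹ * ∑ a : ZMod m,
            ∑ k ∈ Finset.Icc 1 h, ZMod.stdAddChar (a * (k : ZMod m)) * (χ⁻¹ (-a) * T) := by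
          rw [Finset.sum_comm]
      _ = (m : ℂ)⁻¹ * ∑ a : ZMod m, (χ⁻¹ (-a) * T) *
            ∑ k ∈ Finset.Icc 1 h, ZMod.stdAddChar (a * (k : ZMod m)) := by
          congr 1
          refine Finset.sum_congr rfl fun a _ => ?_
          rw [Finset.mul_sum]
          exact Finset.sum_congr rfl fun k _ => by ring
  set F : ZMod m → ℝ := fun a => ‖(χ⁻¹ (-a) * T) *
      ∑ k ∈ Finset.Icc 1 h, ZMod.stdAddChar (a * (k : ZMod m))‖ with hF
  have hF0 : F 0 = 0 := by
    rw [hF]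
    simp only [neg_zero]
    rw [MulChar.map_zero, zero_mul, zero_mul, norm_zero]
  have hFbound : ∀ a ∈ Finset.univ.erase (0 : ZMod m),
      F a ≤ Real.sqrt m * ((m : ℝ) / (2 * min (a.val : ℝ) ((m : ℝ) - a.val))) := by
    intro a ha
    have ha0 : a ≠ 0 := (Finset.mem_erase.mp ha).1
    simp only [hF, norm_mul]
    have h1 : ‖χ⁻¹ (-a)‖ ≤ 1 := by
      exact DirichletCharacter.norm_le_one _ _
    have h2 := pv_expsum_bound hm ha0 h
    calc ‖χ⁻¹ (-a)‖ * ‖T‖ *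
          ‖∑ k ∈ Finset.Icc 1 h, ZMod.stdAddChar (a * (k : ZMod m))‖
        ≤ 1 * Real.sqrt m * ((m : ℝ) / (2 * min (a.val : ℝ) ((m : ℝ) - a.val))) := by
          refine mul_le_mul (by rw [habsT]; exact mul_le_mul_of_nonneg_right h1 (Real.sqrt_nonneg _))
            h2 (by positivity) (by positivity)
      _ = Real.sqrt m * ((m : ℝ) / (2 * min (a.val : ℝ) ((m : ℝ) - a.val))) := by ring
  have hreindex : ∑ a ∈ Finset.univ.erase (0 : ZMod m),
        (1 : ℝ) / (min (a.val : ℝ) ((m : ℝ) - a.val))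
      = ∑ t ∈ Finset.Ioc 0 (m - 1), (1 : ℝ) / (min (t : ℝ) ((m : ℝ) - t)) := by
    refine Finset.sum_nbij' (fun a => a.val) (fun t => (t : ZMod m)) ?_ ?_ ?_ ?_ ?_
    · intro a ha
      have ha0 : a ≠ 0 := (Finset.mem_erase.mp ha).1
      have h1 : a.val ≠ 0 := fun hv => ha0 ((ZMod.val_eq_zero a).mp hv)
      have h2 : a.val < m := a.val_lt
      simp only [Finset.mem_Ioc]
      omega
    · intro t ht
      simp only [Finset.mem_Ioc] at ht
      refine Finset.mem_erase.mpr ⟨?_, Finset.mem_univ _⟩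
      intro h0
      rw [ZMod.natCast_eq_zero_iff] at h0
      have := Nat.le_of_dvd (by omega) h0
      omega
    · intro a _
      exact ZMod.natCast_zmod_val a
    · intro t ht
      simp only [Finset.mem_Ioc] at ht
      exact ZMod.val_cast_of_lt (by omega)
    · intro a _
      rfl
  have habs : ‖∑ k ∈ Finset.Icc 1 h, χ (k : ZMod m)‖
      ≤ (m : ℝ)⁻¹ * ∑ a ∈ Finset.univ.erase (0 : ZMod m), F a := by
    rw [hS, norm_mul, norm_inv, Complex.norm_natCast]
    refine mul_le_mul_of_nonneg_left ?_ (by positivity)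
    calc ‖∑ a : ZMod m, (χ⁻¹ (-a) * T) *
            ∑ k ∈ Finset.Icc 1 h, ZMod.stdAddChar (a * (k : ZMod m))‖
        ≤ ∑ a : ZMod m, F a := norm_sum_le _ _
      _ = ∑ a ∈ Finset.univ.erase (0 : ZMod m), F a := (Finset.sum_erase _ hF0).symm
  calc ‖∑ k ∈ Finset.Icc 1 h, χ (k : ZMod m)‖
      ≤ (m : ℝ)⁻¹ * ∑ a ∈ Finset.univ.erase (0 : ZMod m), F a := habs
    _ ≤ (m : ℝ)⁻¹ * ∑ a ∈ Finset.univ.erase (0 : ZMod m),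
          Real.sqrt m * ((m : ℝ) / (2 * min (a.val : ℝ) ((m : ℝ) - a.val))) := by
        refine mul_le_mul_of_nonneg_left (Finset.sum_le_sum hFbound) (by positivity)
    _ = (m : ℝ)⁻¹ * (Real.sqrt m * ((m : ℝ) / 2) * ∑ a ∈ Finset.univ.erase (0 : ZMod m),
          (1 : ℝ) / (min (a.val : ℝ) ((m : ℝ) - a.val))) := by
        congr 1
        rw [Finset.mul_sum]
        exact Finset.sum_congr rfl fun a _ => by ring
    _ = (m : ℝ)⁻¹ * (Real.sqrt m * ((m : ℝ) / 2) *
          ∑ t ∈ Finset.Ioc 0 (m - 1), (1 : ℝ) / (min (t : ℝ) ((m : ℝ) - t))) := by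
        rw [hreindex]
    _ ≤ (m : ℝ)⁻¹ * (Real.sqrt m * ((m : ℝ) / 2) * (2 * (1 + Real.log m - Real.log 2))) := by
        refine mul_le_mul_of_nonneg_left (mul_le_mul_of_nonneg_left (pv_min_sum_bound hm)
          (by positivity)) (by positivity)
    _ = Real.sqrt m * (1 + Real.log m - Real.log 2) := by
        field_simp

lemma pv_card_divisors {q : ℕ} (hq : q ≠ 0) :
    (q.divisors.card : ℝ) ≤ 2 * Real.sqrt q := by
  classical
  have h1 : q.divisors.card ≤ 2 * Nat.sqrt q := by
    set s := Nat.sqrt q with hs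
    have hcards : (q.divisors.filter (· ≤ s)).card + (q.divisors.filter (fun d => ¬ d ≤ s)).card
        = q.divisors.card := Finset.card_filter_add_card_filter_not _
    have hc1 : (q.divisors.filter (· ≤ s)).card ≤ s := by
      have hsub : q.divisors.filter (· ≤ s) ⊆ Finset.Icc 1 s := by
        intro d hd
        rw [Finset.mem_filter] at hd
        exact Finset.mem_Icc.mpr ⟨Nat.pos_of_mem_divisors hd.1, hd.2⟩
      calc (q.divisors.filter (· ≤ s)).card ≤ (Finset.Icc 1 s).card := Finset.card_le_card hsub
        _ = s := by rw [Nat.card_Icc]; omega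
    have hc2 : (q.divisors.filter (fun d => ¬ d ≤ s)).card ≤ s := by
      have hmaps : ∀ d ∈ q.divisors.filter (fun d => ¬ d ≤ s), q / d ∈ Finset.Icc 1 s := by
        intro d hd
        rw [Finset.mem_filter] at hd
        obtain ⟨hd1, hd2⟩ := hd
        have hdvd : d ∣ q := (Nat.mem_divisors.mp hd1).1
        have hdpos : 0 < d := Nat.pos_of_mem_divisors hd1
        refine Finset.mem_Icc.mpr ⟨?_, ?_⟩
        · rw [Nat.one_le_div_iff hdpos]
          exact Nat.le_of_dvd (Nat.pos_of_ne_zero hq) hdvd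
        · have hlt : q / d < s + 1 := by
            rw [Nat.div_lt_iff_lt_mul hdpos]
            calc q < (s + 1) * (s + 1) := Nat.lt_succ_sqrt q
              _ ≤ (s + 1) * d := Nat.mul_le_mul_left _ (by omega)
          omega
      have hinj : ∀ d₁ ∈ q.divisors.filter (fun d => ¬ d ≤ s),
          ∀ d₂ ∈ q.divisors.filter (fun d => ¬ d ≤ s), q / d₁ = q / d₂ → d₁ = d₂ := by
        intro d₁ hd₁ d₂ hd₂ heq
        rw [Finset.mem_filter] at hd₁ hd₂
        have e₁ : q / (q / d₁) = d₁ := Nat.div_div_self (Nat.mem_divisors.mp hd₁.1).1 hq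
        have e₂ : q / (q / d₂) = d₂ := Nat.div_div_self (Nat.mem_divisors.mp hd₂.1).1 hq
        rw [← e₁, ← e₂, heq]
      calc (q.divisors.filter (fun d => ¬ d ≤ s)).card ≤ (Finset.Icc 1 s).card :=
            Finset.card_le_card_of_injOn _ hmaps hinj
        _ = s := by rw [Nat.card_Icc]; omega
    omega
  calc (q.divisors.card : ℝ) ≤ 2 * (Nat.sqrt q : ℝ) := by exact_mod_cast h1
    _ ≤ 2 * Real.sqrt q := by
        have := Real.nat_sqrt_le_real_sqrt (a := q)
        linarith

open Complex ZMod DirichletCharacter ArithmeticFunction in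
lemma pv_moebius_decomp {n : ℕ} (hn : 2 ≤ n) (χ : DirichletCharacter ℂ n)
    {m : ℕ} (hm : m ∣ n) (χ₀ : DirichletCharacter ℂ m) (hfac : χ = changeLevel hm χ₀)
    (h : ℕ) :
    ∑ k ∈ Finset.Icc 1 h, χ (k : ZMod n) =
      ∑ d ∈ n.divisors, (ArithmeticFunction.moebius d : ℂ) * χ₀ (d : ZMod m) *
        ∑ j ∈ Finset.Icc 1 (h / d), χ₀ (j : ZMod m) := by
  classical
  have hn0 : n ≠ 0 := by omega
  have step1 : ∀ k ∈ Finset.Icc 1 h, χ (k : ZMod n)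
      = (∑ d ∈ n.divisors.filter (· ∣ k), (moebius d : ℂ)) * χ₀ ((k : ℕ) : ZMod m) := by
    intro k hk
    have hgcd0 : Nat.gcd n k ≠ 0 := fun hg => hn0 (Nat.eq_zero_of_gcd_eq_zero_left hg)
    have hgd : n.divisors.filter (· ∣ k) = (Nat.gcd n k).divisors := by
      ext d
      simp only [Finset.mem_filter, Nat.mem_divisors, Nat.dvd_gcd_iff]
      constructor
      · rintro ⟨⟨h1, _⟩, h2⟩; exact ⟨⟨h1, h2⟩, hgcd0⟩
      · rintro ⟨⟨h1, h2⟩, _⟩; exact ⟨⟨h1, hn0⟩, h2⟩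
    have hmsum : ∑ d ∈ (Nat.gcd n k).divisors, (moebius d : ℂ)
        = if Nat.gcd n k = 1 then 1 else 0 := by
      have h2 : ∑ i ∈ (Nat.gcd n k).divisors, moebius i
          = if Nat.gcd n k = 1 then 1 else 0 := by
        rw [← ArithmeticFunction.coe_mul_zeta_apply, ArithmeticFunction.moebius_mul_coe_zeta,
          ArithmeticFunction.one_apply]
      calc ∑ d ∈ (Nat.gcd n k).divisors, (moebius d : ℂ)
          = ((∑ i ∈ (Nat.gcd n k).divisors, moebius i : ℤ) : ℂ) := by push_cast; rfl
        _ = if Nat.gcd n k = 1 then 1 else 0 := by rw [h2]; split_ifs <;> simp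
    rw [hgd, hmsum]
    by_cases hco : Nat.Coprime k n
    · rw [if_pos (by rw [Nat.gcd_comm]; exact hco), one_mul]
      have hu : IsUnit ((k : ZMod n)) := (ZMod.isUnit_iff_coprime k n).mpr hco
      rw [hfac, ← hu.unit_spec, DirichletCharacter.changeLevel_eq_cast_of_dvd χ₀ hm hu.unit,
        hu.unit_spec, ZMod.cast_natCast hm]
    · rw [if_neg (fun h1 => hco (by rwa [Nat.gcd_comm] at h1)), zero_mul]
      exact χ.map_nonunit (fun hu => hco ((ZMod.isUnit_iff_coprime k n).mp hu))
  have key : ∀ d ∈ n.divisors,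
      ∑ k ∈ (Finset.Icc 1 h).filter (fun k => d ∣ k), (moebius d : ℂ) * χ₀ ((k : ℕ) : ZMod m)
      = (moebius d : ℂ) * χ₀ (d : ZMod m) * ∑ j ∈ Finset.Icc 1 (h / d), χ₀ (j : ZMod m) := by
    intro d hd
    have hd1 : 0 < d := Nat.pos_of_mem_divisors hd
    have himg : (Finset.Icc 1 h).filter (fun k => d ∣ k)
        = (Finset.Icc 1 (h / d)).image (fun j => d * j) := by
      ext k
      simp only [Finset.mem_filter, Finset.mem_Icc, Finset.mem_image]
      constructor
      · rintro ⟨⟨hk1, hkh⟩, j, rfl⟩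
        refine ⟨j, ⟨?_, ?_⟩, rfl⟩
        · rcases Nat.eq_zero_or_pos j with rfl | hj
          · omega
          · exact hj
        · rw [Nat.le_div_iff_mul_le hd1, mul_comm]; exact hkh
      · rintro ⟨j, ⟨hj1, hjd⟩, rfl⟩
        refine ⟨⟨?_, ?_⟩, Dvd.intro j rfl⟩
        · exact Nat.one_le_iff_ne_zero.mpr (Nat.mul_ne_zero (by omega) (by omega))
        · rw [mul_comm]
          exact (Nat.le_div_iff_mul_le hd1).mp hjd
    rw [himg, Finset.sum_image (fun x _ y _ hxy => Nat.eq_of_mul_eq_mul_left hd1 hxy),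
      Finset.mul_sum]
    refine Finset.sum_congr rfl fun j hj => ?_
    push_cast
    rw [map_mul]
    ring
  calc ∑ k ∈ Finset.Icc 1 h, χ (k : ZMod n)
      = ∑ k ∈ Finset.Icc 1 h,
          (∑ d ∈ n.divisors.filter (· ∣ k), (moebius d : ℂ)) * χ₀ ((k : ℕ) : ZMod m) :=
        Finset.sum_congr rfl step1
    _ = ∑ k ∈ Finset.Icc 1 h, ∑ d ∈ n.divisors.filter (· ∣ k),
          (moebius d : ℂ) * χ₀ ((k : ℕ) : ZMod m) :=
        Finset.sum_congr rfl fun k _ => Finset.sum_mul _ _ _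
    _ = ∑ k ∈ Finset.Icc 1 h, ∑ d ∈ n.divisors,
          if d ∣ k then (moebius d : ℂ) * χ₀ ((k : ℕ) : ZMod m) else 0 :=
        Finset.sum_congr rfl fun k _ => Finset.sum_filter _ _
    _ = ∑ d ∈ n.divisors, ∑ k ∈ Finset.Icc 1 h,
          if d ∣ k then (moebius d : ℂ) * χ₀ ((k : ℕ) : ZMod m) else 0 := Finset.sum_comm
    _ = ∑ d ∈ n.divisors, ∑ k ∈ (Finset.Icc 1 h).filter (fun k => d ∣ k),
          (moebius d : ℂ) * χ₀ ((k : ℕ) : ZMod m) :=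
        Finset.sum_congr rfl fun d _ => (Finset.sum_filter _ _).symm
    _ = ∑ d ∈ n.divisors, (moebius d : ℂ) * χ₀ (d : ZMod m) *
          ∑ j ∈ Finset.Icc 1 (h / d), χ₀ (j : ZMod m) := Finset.sum_congr rfl key

/-- **Pólya–Vinogradov.** For any integer `n > 1`, any non-principal
Dirichlet character `χ` modulo `n` and any positive integer `h`,
`|∑_{k=1}^{h} χ(k)| ≤ 2 √n log n`. -/
theorem polya_vinogradov (n : ℕ) (hn : 1 < n) (χ : DirichletCharacter ℂ n) (hχ : χ ≠ 1)
    (h : ℕ) (hh : 1 ≤ h) :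
    ‖∑ k ∈ Finset.Icc 1 h, χ (k : ZMod n)‖ ≤
      2 * Real.sqrt n * Real.log n := by
  classical
  have hn0 : n ≠ 0 := by omega
  haveI : NeZero n := ⟨hn0⟩
  have hm0 : χ.conductor ≠ 0 := DirichletCharacter.conductor_ne_zero χ
  have hm1 : χ.conductor ≠ 1 :=
    fun h1 => hχ ((DirichletCharacter.eq_one_iff_conductor_eq_one).mpr h1)
  set m := χ.conductor with hmdef
  have hm2 : 2 ≤ m := by omega
  haveI : NeZero m := ⟨hm0⟩
  set χ₀ := χ.primitiveCharacter with hχ₀def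
  have hmdvd : m ∣ n := DirichletCharacter.conductor_dvd_level χ
  have hfac : χ = DirichletCharacter.changeLevel hmdvd χ₀ :=
    Classical.choose_spec (χ.factorsThrough_conductor).choose_spec
  have hprim : χ₀.IsPrimitive := χ.primitiveCharacter_isPrimitive
  set q := n / m with hqdef
  have hnmq : n = m * q := (Nat.mul_div_cancel' hmdvd).symm
  have hq0 : q ≠ 0 := by
    intro h0
    rw [h0, mul_zero] at hnmq
    omega
  have hlog2 : (0.6931471803 : ℝ) < Real.log 2 := Real.log_two_gt_d9
  have hlogm : Real.log 2 ≤ Real.log m :=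
    Real.log_le_log (by norm_num) (by exact_mod_cast hm2)
  have hXpos : 0 ≤ 1 + Real.log m - Real.log 2 := by linarith
  set B := Real.sqrt m * (1 + Real.log m - Real.log 2) with hB
  have hB0 : 0 ≤ B := mul_nonneg (Real.sqrt_nonneg _) hXpos
  rw [pv_moebius_decomp (by omega) χ hmdvd χ₀ hfac h]
  have hterm : ∀ d ∈ n.divisors,
      ‖(ArithmeticFunction.moebius d : ℂ) * χ₀ (d : ZMod m) *
        ∑ j ∈ Finset.Icc 1 (h / d), χ₀ (j : ZMod m)‖ ≤ B := by
    intro d _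
    rw [norm_mul, norm_mul]
    have h1 : ‖(ArithmeticFunction.moebius d : ℂ)‖ ≤ 1 := by
      by_cases hsq : Squarefree d
      · rw [ArithmeticFunction.moebius_apply_of_squarefree hsq]
        push_cast
        rw [norm_pow]
        simp
      · rw [ArithmeticFunction.moebius_eq_zero_of_not_squarefree hsq]
        simp
    have h2 : ‖χ₀ (d : ZMod m)‖ ≤ 1 := by
      exact DirichletCharacter.norm_le_one _ _
    have h3 : ‖∑ j ∈ Finset.Icc 1 (h / d), χ₀ (j : ZMod m)‖ ≤ B :=
      pv_primitive hm2 hprim (h / d)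
    calc ‖(ArithmeticFunction.moebius d : ℂ)‖ * ‖χ₀ (d : ZMod m)‖ *
          ‖∑ j ∈ Finset.Icc 1 (h / d), χ₀ (j : ZMod m)‖
        ≤ 1 * 1 * B := by
          refine mul_le_mul (mul_le_mul h1 h2 (by positivity) (by norm_num)) h3
            (by positivity) (by norm_num)
      _ = B := by ring
  have hvanish : ∀ d ∈ n.divisors,
      ‖(ArithmeticFunction.moebius d : ℂ) * χ₀ (d : ZMod m) *
        ∑ j ∈ Finset.Icc 1 (h / d), χ₀ (j : ZMod m)‖ ≠ 0 → d ∈ q.divisors := by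
    intro d hd hne
    have hd' := (Nat.mem_divisors.mp hd).1
    have hχ₀d : χ₀ (d : ZMod m) ≠ 0 := by
      intro h0
      apply hne
      rw [h0]
      simp
    have hunit : IsUnit ((d : ZMod m)) := by
      by_contra hu
      exact hχ₀d (χ₀.map_nonunit hu)
    have hcop : Nat.Coprime d m := (ZMod.isUnit_iff_coprime d m).mp hunit
    refine Nat.mem_divisors.mpr ⟨?_, hq0⟩
    have hdq : d ∣ q * m := by
      rw [mul_comm, ← hnmq]
      exact hd'
    exact hcop.dvd_of_dvd_mul_right hdq
  have hchain : ‖∑ d ∈ n.divisors, (ArithmeticFunction.moebius d : ℂ) *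
        χ₀ (d : ZMod m) * ∑ j ∈ Finset.Icc 1 (h / d), χ₀ (j : ZMod m)‖
      ≤ (q.divisors.card : ℝ) * B := by
    calc ‖∑ d ∈ n.divisors, (ArithmeticFunction.moebius d : ℂ) *
          χ₀ (d : ZMod m) * ∑ j ∈ Finset.Icc 1 (h / d), χ₀ (j : ZMod m)‖
        ≤ ∑ d ∈ n.divisors, ‖(ArithmeticFunction.moebius d : ℂ) *
            χ₀ (d : ZMod m) * ∑ j ∈ Finset.Icc 1 (h / d), χ₀ (j : ZMod m)‖ :=
          norm_sum_le _ _
      _ = ∑ d ∈ n.divisors.filter (· ∈ q.divisors),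
            ‖(ArithmeticFunction.moebius d : ℂ) *
            χ₀ (d : ZMod m) * ∑ j ∈ Finset.Icc 1 (h / d), χ₀ (j : ZMod m)‖ :=
          (Finset.sum_filter_of_ne hvanish).symm
      _ ≤ ∑ d ∈ n.divisors.filter (· ∈ q.divisors), B :=
          Finset.sum_le_sum fun d hd => hterm d (Finset.mem_filter.mp hd).1
      _ ≤ ∑ _d ∈ q.divisors, B := by
          refine Finset.sum_le_sum_of_subset_of_nonneg
            (fun d hd => (Finset.mem_filter.mp hd).2) (fun _ _ _ => hB0)
      _ = (q.divisors.card : ℝ) * B := by rw [Finset.sum_const, nsmul_eq_mul]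
  refine hchain.trans ?_
  rcases eq_or_lt_of_le (Nat.one_le_iff_ne_zero.mpr hq0) with hq1 | hq2
  · -- q = 1, n = m
    have hnm : n = m := by rw [hnmq, ← hq1, mul_one]
    have hcard : q.divisors.card = 1 := by
      rw [← hq1]
      rfl
    rw [hcard, hnm, Nat.cast_one]
    have hfin : 1 + Real.log m - Real.log 2 ≤ 2 * Real.log m := by linarith
    calc (1 : ℝ) * B = Real.sqrt m * (1 + Real.log m - Real.log 2) := by rw [one_mul]
      _ ≤ Real.sqrt m * (2 * Real.log m) :=
          mul_le_mul_of_nonneg_left hfin (Real.sqrt_nonneg _)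
      _ = 2 * Real.sqrt m * Real.log m := by ring
  · -- 2 ≤ q
    have hq2' : 2 ≤ q := hq2
    have hlogq : Real.log 2 ≤ Real.log q :=
      Real.log_le_log (by norm_num) (by exact_mod_cast hq2')
    have hsqrtn : Real.sqrt n = Real.sqrt m * Real.sqrt q := by
      rw [show ((n : ℝ)) = (m : ℝ) * (q : ℝ) by exact_mod_cast hnmq,
        Real.sqrt_mul (by positivity)]
    have hlogn : Real.log n = Real.log m + Real.log q := by
      rw [show ((n : ℝ)) = (m : ℝ) * (q : ℝ) by exact_mod_cast hnmq,
        Real.log_mul (by positivity) (by positivity)]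
    have hX : 1 + Real.log m - Real.log 2 ≤ Real.log m + Real.log q := by linarith
    calc (q.divisors.card : ℝ) * B ≤ 2 * Real.sqrt q * B :=
          mul_le_mul_of_nonneg_right (pv_card_divisors hq0) hB0
      _ = 2 * (Real.sqrt m * Real.sqrt q) * (1 + Real.log m - Real.log 2) := by
          rw [hB]; ring
      _ ≤ 2 * (Real.sqrt m * Real.sqrt q) * (Real.log m + Real.log q) :=
          mul_le_mul_of_nonneg_left hX (by positivity)
      _ = 2 * Real.sqrt n * Real.log n := by rw [hsqrtn, hlogn]
end

section
/- Let q ≥ 2, d ≥ 1, a coprime to q, and let G^{(d)} be the group of d-th power residues modulo q. Then for every ε > 0, Ψ_{μq^d}(aG^{(d)}) = r_d(q)·q^{d−1}·(μ + o(q^{−(1/2−ε)})) uniformly in μ ∈ (0, 1]; concretely, |Ψ_{μq^d}(aG^{(d)}) − μ·r_d(q)·q^{d−1}| ≤ r_d(q)·q^{d−1}·E(q) where E(q)·q^{1/2−ε} → 0 as q → ∞ along any sequence. -/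
open Filter Finset

lemma aux_pp_odd {p a : ℕ} (hp : p.Prime) (hodd : p ≠ 2) (ha : 1 ≤ a) :
    p ^ a ≤ Nat.totient (p ^ a) ^ 2 := by
  rw [Nat.totient_prime_pow hp ha]
  have hp3 : 3 ≤ p := by
    have := hp.two_le; rcases Nat.lt_or_ge p 3 with h | h
    · interval_cases p <;> simp_all
    · exact h
  have h1 : p ≤ (p - 1) ^ 2 := by
    obtain ⟨b, rfl⟩ : ∃ b, p = b + 3 := ⟨p - 3, by omega⟩
    have : (b + 3) - 1 = b + 2 := by omega
    rw [this]; nlinarith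
  calc p ^ a = p ^ (a - 1) * p := by rw [← pow_succ]; congr 1; omega
    _ ≤ (p ^ (a-1))^2 * (p-1)^2 := by
        apply Nat.mul_le_mul _ h1
        exact Nat.le_self_pow (by omega) _
    _ = (p ^ (a - 1) * (p - 1)) ^ 2 := by ring

lemma aux_pp_two {a : ℕ} (ha : 1 ≤ a) :
    2 ^ a ≤ 2 * Nat.totient (2 ^ a) ^ 2 := by
  rw [Nat.totient_prime_pow Nat.prime_two ha]
  have : 2 - 1 = 1 := rfl
  rw [this, mul_one]
  calc 2 ^ a ≤ 2 ^ (1 + (a-1) * 2) := Nat.pow_le_pow_right (by norm_num) (by omega)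
    _ = 2 * (2 ^ (a-1))^2 := by rw [pow_add, pow_mul, pow_one]

lemma totient_sq_bound : ∀ q : ℕ, 1 ≤ q →
    q ≤ 2 * Nat.totient q ^ 2 ∧ (¬ 2 ∣ q → q ≤ Nat.totient q ^ 2) := by
  intro q
  induction q using Nat.strong_induction_on with
  | _ q ih =>
    intro hq1
    rcases eq_or_lt_of_le hq1 with h1 | h2
    · simp [← h1]
    · set p := q.minFac with hpdef
      have hp : p.Prime := Nat.minFac_prime (by omega)
      have hpq : p ∣ q := q.minFac_dvd
      have hq0 : q ≠ 0 := by omega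
      set a := q.factorization p with hadef
      have ha : 1 ≤ a := by
        rw [hadef]
        have h' : p ∈ q.primeFactors := Nat.mem_primeFactors.mpr ⟨hp, hpq, hq0⟩
        have h'' := (Nat.support_factorization q ▸ h')
        exact Nat.one_le_iff_ne_zero.mpr (Finsupp.mem_support_iff.mp h'')
      set m := q / p ^ a with hmdef
      have hqm : q = p ^ a * m := (Nat.ordProj_mul_ordCompl_eq_self q p).symm
      have hcop : Nat.Coprime (p ^ a) m :=
        Nat.Coprime.pow_left _ (Nat.coprime_ordCompl hp hq0)
      have hpm : ¬ p ∣ m := Nat.not_dvd_ordCompl hp hq0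
      have hm1 : 1 ≤ m := Nat.pos_of_ne_zero (by intro h; rw [h, mul_zero] at hqm; omega)
      have hmlt : m < q := by
        have hpa : 1 < p ^ a := Nat.one_lt_pow (by omega) hp.one_lt
        calc m = 1 * m := (one_mul m).symm
          _ < p ^ a * m := by exact (Nat.mul_lt_mul_right hm1).mpr hpa
          _ = q := hqm.symm
      have htot : Nat.totient q = Nat.totient (p ^ a) * Nat.totient m := by
        conv_lhs => rw [hqm]
        exact Nat.totient_mul hcop
      obtain ⟨ihm2, ihmodd⟩ := ih m hmlt hm1
      by_cases hp2 : p = 2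
      · have hmodd : ¬ 2 ∣ m := by rw [← hp2]; exact hpm
        have hmsq : m ≤ Nat.totient m ^ 2 := ihmodd hmodd
        constructor
        · rw [htot]
          conv_lhs => rw [hqm]
          rw [mul_pow, ← mul_assoc]
          exact Nat.mul_le_mul (hp2 ▸ aux_pp_two ha) hmsq
        · intro h2q
          rw [hp2] at hpq
          exact absurd hpq h2q
      · have hqodd : ¬ 2 ∣ q := by
          intro h2
          have h3 : p ≤ 2 := Nat.minFac_le_of_dvd (by norm_num) h2
          have := hp.two_le; omega
        have hmodd : ¬ 2 ∣ m := fun h => hqodd (h.trans ⟨p ^ a, by rw [hqm]; ring⟩)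
        have hsq : q ≤ Nat.totient q ^ 2 := by
          rw [htot]
          conv_lhs => rw [hqm]
          rw [mul_pow]
          exact Nat.mul_le_mul (aux_pp_odd hp hp2 ha) (ihmodd hmodd)
        exact ⟨hsq.trans (Nat.le_mul_of_pos_left _ (by norm_num)), fun _ => hsq⟩

lemma sqfree_divisors_le (q : ℕ) (hq : q ≠ 0) :
    ({e ∈ q.divisors | Squarefree e}).card ≤ 2 ^ q.primeFactors.card := by
  rw [← Finset.card_powerset]
  apply Finset.card_le_card_of_injOn (fun e => e.primeFactors)
  · intro e he
    simp only [Finset.coe_filter, Set.mem_setOf_eq, Nat.mem_divisors] at he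
    exact Finset.mem_powerset.mpr (Nat.primeFactors_mono he.1.1 hq)
  · intro e₁ h₁ e₂ h₂ h
    simp only [Finset.coe_filter, Set.mem_setOf_eq, Nat.mem_divisors] at h₁ h₂
    have h' : e₁.primeFactors = e₂.primeFactors := h
    rw [← Nat.prod_primeFactors_of_squarefree h₁.2, ← Nat.prod_primeFactors_of_squarefree h₂.2, h']

lemma omega_bound (k : ℕ) (hk : 1 ≤ k) (q : ℕ) (hq : 1 ≤ q) :
    (2 : ℝ) ^ q.primeFactors.card ≤ 2 ^ (2 ^ k) * (q : ℝ) ^ ((1 : ℝ)/k) := by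
  set M := 2 ^ k with hM
  set c₂ := ({p ∈ q.primeFactors | M ≤ p}).card with hc2
  have hsplit : q.primeFactors.card ≤ M + c₂ := by
    have key := Finset.card_filter_add_card_filter_not
      (s := q.primeFactors) (p := fun p => M ≤ p)
    have hsmall : ({p ∈ q.primeFactors | ¬ M ≤ p}).card ≤ M := by
      calc ({p ∈ q.primeFactors | ¬ M ≤ p}).card ≤ (Finset.range M).card := by
            apply Finset.card_le_card
            intro p hp
            simp only [Finset.mem_filter, not_le] at hp
            exact Finset.mem_range.mpr hp.2
        _ = M := Finset.card_range M
    omega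
  have hMq : M ^ c₂ ≤ q := by
    calc M ^ c₂ ≤ ∏ p ∈ {p ∈ q.primeFactors | M ≤ p}, p :=
          Finset.pow_card_le_prod _ _ _ (fun p hp => (Finset.mem_filter.mp hp).2)
      _ ≤ ∏ p ∈ q.primeFactors, p := by
          apply Finset.prod_le_prod_of_subset_of_one_le' (Finset.filter_subset _ _)
          intro p hp _
          exact (Nat.prime_of_mem_primeFactors hp).one_lt.le
      _ ≤ q := Nat.le_of_dvd (by omega) (Nat.prod_primeFactors_dvd q)
  have hn : (2 : ℕ) ^ (c₂ * k) ≤ q := by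
    rw [hM, ← pow_mul, mul_comm k c₂] at hMq; exact hMq
  have h2c : (2 : ℝ) ^ c₂ ≤ (q : ℝ) ^ ((1 : ℝ)/k) := by
    set x : ℝ := (2 : ℝ) ^ c₂ with hx
    have hx0 : (0:ℝ) ≤ x := by positivity
    have hxk : x ^ (k : ℕ) ≤ (q : ℝ) := by
      rw [hx, ← pow_mul]
      exact_mod_cast hn
    have hid : x = (x ^ ((k:ℕ) : ℝ)) ^ ((1:ℝ)/k) := by
      rw [← Real.rpow_mul hx0, mul_one_div, div_self (by positivity : ((k:ℕ):ℝ) ≠ 0),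
        Real.rpow_one]
    rw [hid]
    apply Real.rpow_le_rpow (by positivity) _ (by positivity)
    rw [Real.rpow_natCast]
    exact hxk
  calc (2:ℝ) ^ q.primeFactors.card ≤ (2:ℝ) ^ (M + c₂) :=
        pow_le_pow_right₀ (by norm_num) hsplit
    _ = 2 ^ M * 2 ^ c₂ := pow_add 2 M c₂
    _ ≤ 2 ^ M * (q : ℝ) ^ ((1:ℝ)/k) := mul_le_mul_of_nonneg_left h2c (by positivity)

section MoebiusPart
open ArithmeticFunction

lemma legendre_count (q N : ℕ) (hq : q ≠ 0) :
    ((#{p ∈ Icc 1 N | p.Coprime q}) : ℤ) =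
      ∑ e ∈ q.divisors, (moebius e) * (N / e : ℕ) := by
  rw [Finset.card_filter]
  push_cast
  have step1 : ∀ p ∈ Icc 1 N,
      (if p.Coprime q then (1:ℤ) else 0) = ∑ e ∈ q.divisors, if e ∣ p then moebius e else 0 := by
    intro p hp
    have hp1 : 1 ≤ p := (Finset.mem_Icc.mp hp).1
    have hdiv : {e ∈ q.divisors | e ∣ p} = (Nat.gcd p q).divisors := by
      ext e
      simp only [Finset.mem_filter, Nat.mem_divisors, Nat.dvd_gcd_iff]
      constructor
      · rintro ⟨⟨h1, _⟩, h2⟩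
        exact ⟨⟨h2, h1⟩, Nat.gcd_ne_zero_right hq⟩
      · rintro ⟨⟨h2, h1⟩, _⟩
        exact ⟨⟨h1, hq⟩, h2⟩
    rw [← Finset.sum_filter, hdiv, ← coe_mul_zeta_apply, moebius_mul_coe_zeta, one_apply]
  rw [Finset.sum_congr rfl step1, Finset.sum_comm]
  apply Finset.sum_congr rfl
  intro e he
  rw [← Finset.sum_filter, Finset.sum_const, nsmul_eq_mul, mul_comm]
  congr 1
  have : Finset.Icc 1 N = Finset.Ioc 0 N := rfl
  rw [this]
  rw [Nat.Ioc_filter_dvd_card_eq_div]; push_cast; ring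

lemma totient_eq_Icc (q : ℕ) (hq : 2 ≤ q) :
    #{p ∈ Icc 1 q | p.Coprime q} = Nat.totient q := by
  have h1 : {p ∈ Icc 1 q | p.Coprime q} = {p ∈ range q | q.Coprime p} := by
    ext p
    simp only [mem_filter, mem_Icc, mem_range]
    constructor
    · rintro ⟨⟨ha, hb⟩, hc⟩
      have hpq : p ≠ q := by
        rintro rfl
        rw [Nat.Coprime, Nat.gcd_self] at hc
        omega
      exact ⟨by omega, hc.symm⟩
    · rintro ⟨ha, hc⟩
      have hp0 : p ≠ 0 := by
        rintro rfl
        rw [Nat.coprime_zero_right] at hc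
        omega
      exact ⟨⟨by omega, by omega⟩, hc.symm⟩
  rw [h1, Nat.totient_eq_card_coprime]

lemma coprime_count_error (q : ℕ) (hq : 2 ≤ q) (u : ℝ) (hu0 : 0 ≤ u) (hu1 : u ≤ 1) :
    |((#{p ∈ Icc 1 ⌊u * q⌋₊ | p.Coprime q}) : ℝ) - u * Nat.totient q|
      ≤ (#{e ∈ q.divisors | Squarefree e} : ℝ) := by
  have hq0 : q ≠ 0 := by omega
  have hA : ((#{p ∈ Icc 1 ⌊u * q⌋₊ | p.Coprime q}) : ℝ) =
      ∑ e ∈ q.divisors, ((moebius e : ℤ) : ℝ) * ((⌊u * q⌋₊ / e : ℕ) : ℝ) := by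
    have h := legendre_count q ⌊u * (q:ℝ)⌋₊ hq0
    conv_lhs => rw [← Int.cast_natCast (R := ℝ), h]
    simp only [Int.cast_sum, Int.cast_mul, Int.cast_natCast]
  have hφ : (Nat.totient q : ℝ) =
      ∑ e ∈ q.divisors, ((moebius e : ℤ) : ℝ) * ((q / e : ℕ) : ℝ) := by
    rw [← totient_eq_Icc q hq]
    have h := legendre_count q q hq0
    conv_lhs => rw [← Int.cast_natCast (R := ℝ), h]
    simp only [Int.cast_sum, Int.cast_mul, Int.cast_natCast]
  rw [hA, hφ, Finset.mul_sum, ← Finset.sum_sub_distrib]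
  have hterm : ∀ e ∈ q.divisors,
      |((moebius e : ℤ) : ℝ) * ((⌊u * q⌋₊ / e : ℕ) : ℝ)
        - u * (((moebius e : ℤ) : ℝ) * ((q / e : ℕ) : ℝ))|
      ≤ if Squarefree e then 1 else 0 := by
    intro e he
    obtain ⟨hedvd, -⟩ := Nat.mem_divisors.mp he
    have he0 : e ≠ 0 := by
      rintro rfl; exact hq0 (Nat.eq_zero_of_zero_dvd hedvd)
    by_cases hsq : Squarefree e
    · rw [if_pos hsq]
      have habs : |((moebius e : ℤ) : ℝ)| = 1 := by
        have := abs_moebius_eq_one_of_squarefree hsq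
        rw [← Int.cast_abs, this, Int.cast_one]
      have key : |((⌊u * q⌋₊ / e : ℕ) : ℝ) - u * ((q / e : ℕ) : ℝ)| ≤ 1 := by
        have hqe : ((q / e : ℕ) : ℝ) = (q : ℝ) / e :=
          Nat.cast_div hedvd (by exact_mod_cast he0)
        have hfl : (⌊u * q⌋₊ / e : ℕ) = ⌊(u * q) / e⌋₊ := (Nat.floor_div_natCast (u * q) e).symm
        have hx0 : 0 ≤ u * q / e := by positivity
        have h1 : (⌊(u * q) / e⌋₊ : ℝ) ≤ u * q / e := Nat.floor_le hx0
        have h2 : u * q / e < ⌊(u * q) / e⌋₊ + 1 := Nat.lt_floor_add_one _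
        rw [hfl, hqe]
        rw [abs_le]
        constructor
        · rw [← mul_div_assoc]; linarith
        · rw [← mul_div_assoc]; linarith
      calc |((moebius e : ℤ) : ℝ) * ((⌊u * q⌋₊ / e : ℕ) : ℝ)
            - u * (((moebius e : ℤ) : ℝ) * ((q / e : ℕ) : ℝ))|
          = |((moebius e : ℤ) : ℝ)| * |((⌊u * q⌋₊ / e : ℕ) : ℝ) - u * ((q / e : ℕ) : ℝ)| := by
            rw [← abs_mul]; congr 1; ring
        _ ≤ 1 := by rw [habs, one_mul]; exact key
    · rw [if_neg hsq, moebius_eq_zero_of_not_squarefree hsq]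
      simp
  calc |∑ e ∈ q.divisors, (((moebius e : ℤ) : ℝ) * ((⌊u * q⌋₊ / e : ℕ) : ℝ)
          - u * (((moebius e : ℤ) : ℝ) * ((q / e : ℕ) : ℝ)))|
      ≤ ∑ e ∈ q.divisors, |((moebius e : ℤ) : ℝ) * ((⌊u * q⌋₊ / e : ℕ) : ℝ)
          - u * (((moebius e : ℤ) : ℝ) * ((q / e : ℕ) : ℝ))| := Finset.abs_sum_le_sum_abs _ _
    _ ≤ ∑ e ∈ q.divisors, if Squarefree e then (1:ℝ) else 0 := Finset.sum_le_sum hterm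
    _ = (#{e ∈ q.divisors | Squarefree e} : ℝ) := by
        rw [Finset.sum_boole]

end MoebiusPart

lemma tendsto_d2 (ε : ℝ) (hε : 0 < ε) :
    Tendsto (fun q : ℕ => 2 / (q : ℝ) * (q : ℝ) ^ ((1 : ℝ) / 2 - ε)) atTop (nhds 0) := by
  have h0 : Tendsto (fun x : ℝ => 2 * x ^ (-(1/2 + ε))) atTop (nhds 0) := by
    have := (tendsto_rpow_neg_atTop (by linarith : (0:ℝ) < 1/2 + ε)).const_mul 2
    simpa using this
  have h1 : Tendsto (fun q : ℕ => 2 * (q : ℝ) ^ (-(1/2 + ε))) atTop (nhds 0) :=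
    h0.comp tendsto_natCast_atTop_atTop
  apply h1.congr'
  filter_upwards [eventually_ge_atTop 1] with q hq
  have hq0 : (0:ℝ) < q := by exact_mod_cast hq
  rw [div_mul_eq_mul_div, mul_div_assoc]
  congr 1
  rw [eq_div_iff hq0.ne', ← Real.rpow_add_one hq0.ne']
  congr 1
  ring

lemma tendsto_d1 (ε : ℝ) (hε : 0 < ε) :
    Tendsto (fun q : ℕ =>
      ((({e ∈ q.divisors | Squarefree e}).card : ℝ) / (Nat.totient q : ℝ))
        * (q : ℝ) ^ ((1 : ℝ) / 2 - ε)) atTop (nhds 0) := by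
  set k : ℕ := ⌈1/ε⌉₊ + 1 with hk
  have hk1 : 1 ≤ k := by omega
  have hklt : (1:ℝ)/k < ε := by
    rw [div_lt_iff₀ (by positivity : (0:ℝ) < k)]
    have h1 : (1:ℝ)/ε < k := by
      calc (1:ℝ)/ε ≤ ⌈1/ε⌉₊ := Nat.le_ceil _
        _ < k := by rw [hk]; push_cast; linarith
    rw [div_lt_iff₀ hε] at h1
    linarith [h1]
  set C : ℝ := 2 ^ (2 ^ k) * Real.sqrt 2 with hC
  have hgz : Tendsto (fun q : ℕ => C * (q:ℝ) ^ ((1:ℝ)/k - ε)) atTop (nhds 0) := by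
    have h0 : Tendsto (fun x : ℝ => C * x ^ (-(ε - 1/k))) atTop (nhds 0) := by
      have := (tendsto_rpow_neg_atTop (by linarith : (0:ℝ) < ε - 1/k)).const_mul C
      simpa using this
    have h1 := h0.comp tendsto_natCast_atTop_atTop
    apply h1.congr
    intro q
    simp only [Function.comp_apply]
    congr 2
    ring
  apply squeeze_zero' (g := fun q : ℕ => C * (q:ℝ) ^ ((1:ℝ)/k - ε)) ?_ ?_ hgz
  · filter_upwards with q
    positivity
  · filter_upwards [eventually_ge_atTop 1] with q hq
    have hq0 : (0:ℝ) < q := by exact_mod_cast hq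
    have hφ0 : (0:ℝ) < Nat.totient q := by
      exact_mod_cast Nat.totient_pos.mpr (by omega)
    have h1 : (({e ∈ q.divisors | Squarefree e}).card : ℝ) ≤ 2 ^ q.primeFactors.card := by
      exact_mod_cast sqfree_divisors_le q (by omega)
    have h2 := omega_bound k hk1 q hq
    have h3 : ((Nat.totient q : ℝ))⁻¹ ≤ Real.sqrt 2 * (q:ℝ) ^ (-(1/2) : ℝ) := by
      have hq2 : (q:ℝ) ≤ 2 * (Nat.totient q : ℝ) ^ 2 := by
        exact_mod_cast (totient_sq_bound q hq).1
      have hsq : (q:ℝ) ^ ((1:ℝ)/2) ≤ Real.sqrt 2 * Nat.totient q := by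
        rw [← Real.sqrt_eq_rpow]
        calc Real.sqrt q ≤ Real.sqrt (2 * (Nat.totient q : ℝ) ^ 2) := Real.sqrt_le_sqrt hq2
          _ = Real.sqrt 2 * Nat.totient q := by
              rw [Real.sqrt_mul (by norm_num), Real.sqrt_sq hφ0.le]
      have heq : (((q:ℝ) ^ ((1:ℝ)/2)) / Real.sqrt 2)⁻¹ = Real.sqrt 2 * (((q:ℝ) ^ ((1:ℝ)/2))⁻¹) := by
        rw [inv_div]
        exact div_eq_mul_inv _ _
      rw [Real.rpow_neg hq0.le, ← heq]
      apply inv_anti₀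
      · positivity
      · rw [div_le_iff₀ (by positivity : (0:ℝ) < Real.sqrt 2)]
        linarith [hsq]
    calc (({e ∈ q.divisors | Squarefree e}).card : ℝ) / (Nat.totient q : ℝ) * (q : ℝ) ^ ((1:ℝ)/2 - ε)
        = (({e ∈ q.divisors | Squarefree e}).card : ℝ) * (((Nat.totient q : ℝ))⁻¹ * (q : ℝ) ^ ((1:ℝ)/2 - ε)) := by
          ring
      _ ≤ (2 ^ (2^k) * (q:ℝ) ^ ((1:ℝ)/k)) * ((Real.sqrt 2 * (q:ℝ) ^ (-(1/2) : ℝ)) * (q : ℝ) ^ ((1:ℝ)/2 - ε)) := by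
          apply mul_le_mul (h1.trans h2) ?_ (by positivity) (by positivity)
          apply mul_le_mul_of_nonneg_right h3 (by positivity)
      _ = C * (q:ℝ) ^ ((1:ℝ)/k - ε) := by
          have hprod : (q:ℝ)^((1:ℝ)/k) * ((q:ℝ)^(-(1/2):ℝ) * (q:ℝ)^((1:ℝ)/2-ε)) = (q:ℝ)^((1:ℝ)/k-ε) := by
            rw [← Real.rpow_add hq0, ← Real.rpow_add hq0]
            congr 1
            ring
          calc (2 ^ (2^k) * (q:ℝ) ^ ((1:ℝ)/k)) * ((Real.sqrt 2 * (q:ℝ) ^ (-(1/2) : ℝ)) * (q : ℝ) ^ ((1:ℝ)/2 - ε))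
              = (2 ^ (2^k) * Real.sqrt 2) * ((q:ℝ)^((1:ℝ)/k) * ((q:ℝ)^(-(1/2):ℝ) * (q:ℝ)^((1:ℝ)/2-ε))) := by ring
            _ = C * (q:ℝ) ^ ((1:ℝ)/k - ε) := by rw [hprod, hC]

lemma class_count (q : ℕ) (hq : 2 ≤ q) (v : ℕ) (hv1 : 1 ≤ v) (hvq : v < q) (B : ℝ) (hB : 0 ≤ B) :
    |((#{p ∈ Icc 1 ⌊B⌋₊ | p ≡ v [MOD q]}) : ℝ) - B / q| ≤ 2 := by
  set N := ⌊B⌋₊ with hN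
  have hq0 : 0 < q := by omega
  have hcount : #{p ∈ Icc 1 N | p ≡ v [MOD q]} = (N+1) / q + if v % q < (N+1) % q then 1 else 0 := by
    rw [← Nat.count_modEq_card (N+1) hq0 v]
    rw [Nat.count_eq_card_filter_range]
    congr 1
    have hr : Finset.range (N+1) = insert 0 (Icc 1 N) := by
      ext x
      simp only [Finset.mem_range, Finset.mem_insert, Finset.mem_Icc]
      omega
    rw [hr, Finset.filter_insert, if_neg]
    intro h
    have : 0 % q = v % q := h
    rw [Nat.zero_mod, Nat.mod_eq_of_lt hvq] at this
    omega
  have hNB1 : (N : ℝ) ≤ B := Nat.floor_le hB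
  have hNB2 : B < (N : ℝ) + 1 := Nat.lt_floor_add_one B
  set D := (N+1)/q with hD
  set r := (N+1)%q with hrdef
  have hr : r < q := Nat.mod_lt _ hq0
  have hDr : N + 1 = q * D + r := (Nat.div_add_mod (N+1) q).symm
  have hcount2 : (#{p ∈ Icc 1 N | p ≡ v [MOD q]} : ℝ) = D + if v % q < (N+1) % q then 1 else 0 := by
    rw [hcount]
    push_cast
    ring
  have hqR : (0:ℝ) < q := by exact_mod_cast hq0
  have hrR : (0:ℝ) ≤ r := by positivity
  have hrR2 : (r:ℝ) ≤ q - 1 := by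
    have : (r:ℝ) < q := by exact_mod_cast hr
    have h2 : (r:ℝ) ≤ (q:ℝ) - 1 := by
      have : r + 1 ≤ q := hr
      have := (Nat.cast_le (α := ℝ)).mpr this
      push_cast at this
      linarith
    exact h2
  have hsum : (q:ℝ) * D + r = (N:ℝ) + 1 := by exact_mod_cast hDr.symm
  rw [hcount2, abs_le]
  have hite : (0:ℝ) ≤ (if v % q < (N+1) % q then (1:ℝ) else 0) ∧
      (if v % q < (N+1) % q then (1:ℝ) else 0) ≤ 1 := by
    split <;> norm_num
  set t := B / q with ht
  have hBt : B = t * q := by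
    rw [ht, div_mul_cancel₀ _ hqR.ne']
  have hq1R : (1:ℝ) ≤ q := by linarith
  have k1 : (t - (D:ℝ)) * q < 1 * q := by nlinarith [hsum, hNB2, hrR2, hBt]
  have k1' : t - (D:ℝ) < 1 := (mul_lt_mul_iff_of_pos_right hqR).mp k1
  have k2 : ((D:ℝ) - t) * q ≤ 1 * q := by nlinarith [hsum, hNB1, hrR, hBt, hq1R]
  have k2' : (D:ℝ) - t ≤ 1 := (mul_le_mul_iff_of_pos_right hqR).mp k2
  constructor
  · linarith [hite.1]
  · linarith [hite.2]

/-- `r_d(q)`: the number of distinct `d`-th powers in a reduced residue system modulo `q`. -/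
noncomputable def rdPowers (d q : ℕ) : ℕ := Nat.card (Set.range (fun x : (ZMod q)ˣ => x ^ d))

lemma card_coset (q d : ℕ) [NeZero q] (a : (ZMod q)ˣ) :
    (Finset.image (fun x : (ZMod q)ˣ => ((a * x ^ d : (ZMod q)ˣ) : ZMod q)) Finset.univ).card
      = rdPowers d q := by
  have h1 : (Finset.image (fun x : (ZMod q)ˣ => ((a * x ^ d : (ZMod q)ˣ) : ZMod q)) Finset.univ)
      = Finset.image Units.val (Finset.image (fun y : (ZMod q)ˣ => a * y)
          (Finset.image (fun x : (ZMod q)ˣ => x ^ d) Finset.univ)) := by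
    rw [Finset.image_image, Finset.image_image]
    rfl
  rw [h1, Finset.card_image_of_injective _ Units.val_injective,
    Finset.card_image_of_injective _ (mul_right_injective a)]
  unfold rdPowers
  have h2 : (Set.range (fun x : (ZMod q)ˣ => x ^ d))
      = ↑(Finset.image (fun x : (ZMod q)ˣ => x ^ d) Finset.univ) := by
    rw [Finset.coe_image, Finset.coe_univ, Set.image_univ]
  rw [h2, Nat.card_coe_set_eq, Set.ncard_coe_finset]

lemma generic_count (q d : ℕ) (hq : 2 ≤ q) (a : (ZMod q)ˣ) (B : ℝ) (hB : 0 ≤ B) :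
    haveI : NeZero q := ⟨by omega⟩
    |((#((Icc 1 ⌊B⌋₊).filter (fun p : ℕ =>
        ∃ x : (ZMod q)ˣ, (p : ZMod q) = ((a * x ^ d : (ZMod q)ˣ) : ZMod q)))) : ℝ)
      - (rdPowers d q : ℝ) * (B / q)| ≤ 2 * (rdPowers d q : ℝ) := by
  haveI : NeZero q := ⟨by omega⟩
  haveI : Fact (1 < q) := ⟨by omega⟩
  set N := ⌊B⌋₊ with hN
  set Cfin := Finset.image (fun x : (ZMod q)ˣ => ((a * x ^ d : (ZMod q)ˣ) : ZMod q)) Finset.univ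
    with hCfin
  have hCcard : Cfin.card = rdPowers d q := card_coset q d a
  have hpred : (Icc 1 N).filter (fun p : ℕ =>
        ∃ x : (ZMod q)ˣ, (p : ZMod q) = ((a * x ^ d : (ZMod q)ˣ) : ZMod q))
      = (Icc 1 N).filter (fun p : ℕ => (p : ZMod q) ∈ Cfin) := by
    apply Finset.filter_congr
    intro p _
    simp only [hCfin, Finset.mem_image, Finset.mem_univ, true_and, eq_comm]
  rw [hpred]
  set T := (Icc 1 N).filter (fun p : ℕ => (p : ZMod q) ∈ Cfin) with hT
  have hsum : T.card = ∑ c ∈ Cfin, #(T.filter (fun p : ℕ => (p : ZMod q) = c)) :=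
    Finset.card_eq_sum_card_fiberwise (fun p hp => (Finset.mem_filter.mp hp).2)
  have hfib : ∀ c ∈ Cfin, T.filter (fun p : ℕ => (p : ZMod q) = c)
      = {p ∈ Icc 1 N | p ≡ (ZMod.val c) [MOD q]} := by
    intro c hc
    rw [hT, Finset.filter_filter]
    apply Finset.filter_congr
    intro p _
    have hcv : ((ZMod.val c : ℕ) : ZMod q) = c := by
      rw [ZMod.natCast_val, ZMod.cast_id]
    constructor
    · rintro ⟨-, h⟩
      rw [← hcv] at h
      exact (ZMod.natCast_eq_natCast_iff _ _ _).mp h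
    · intro h
      have h' : (p : ZMod q) = c := by
        rw [← hcv]
        exact (ZMod.natCast_eq_natCast_iff _ _ _).mpr h
      exact ⟨h' ▸ hc, h'⟩
  have hclass : ∀ c ∈ Cfin,
      |((#(T.filter (fun p : ℕ => (p : ZMod q) = c))) : ℝ) - B / q| ≤ 2 := by
    intro c hc
    rw [hfib c hc]
    obtain ⟨x, -, hx⟩ := Finset.mem_image.mp hc
    have hcu : IsUnit c := hx ▸ (a * x ^ d).isUnit
    have hc0 : c ≠ 0 := hcu.ne_zero
    have hv1 : 1 ≤ ZMod.val c := by
      rcases Nat.eq_zero_or_pos (ZMod.val c) with h | h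
      · exact absurd ((ZMod.val_eq_zero c).mp h) hc0
      · exact h
    exact class_count q hq (ZMod.val c) hv1 (ZMod.val_lt c) B hB
  calc |(T.card : ℝ) - (rdPowers d q : ℝ) * (B / q)|
      = |∑ c ∈ Cfin, (((#(T.filter (fun p : ℕ => (p : ZMod q) = c))) : ℝ) - B / q)| := by
        rw [Finset.sum_sub_distrib, Finset.sum_const, ← hCcard]
        congr 2
        · exact_mod_cast congrArg (Nat.cast (R := ℝ)) hsum
        · rw [nsmul_eq_mul]
    _ ≤ ∑ c ∈ Cfin, |((#(T.filter (fun p : ℕ => (p : ZMod q) = c))) : ℝ) - B / q| :=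
        Finset.abs_sum_le_sum_abs _ _
    _ ≤ ∑ _c ∈ Cfin, (2:ℝ) := Finset.sum_le_sum hclass
    _ = 2 * (rdPowers d q : ℝ) := by
        rw [Finset.sum_const, ← hCcard, nsmul_eq_mul, mul_comm]

/-- For fixed `d ≥ 1` and every `ε > 0` there is an error function `E`
with `E(q)·q^{1/2−ε} → 0` such that, uniformly in the unit `a` and in `μ ∈ (0,1]`,
`|Ψ_{μq^d}(aG^{(d)}) − μ·r_d(q)·q^{d−1}| ≤ r_d(q)·q^{d−1}·E(q)`. -/
theorem coset_count_asymptotic (d : ℕ) (hd : 1 ≤ d) (ε : ℝ) (hε : 0 < ε) :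
    ∃ E : ℕ → ℝ,
      Tendsto (fun q : ℕ => E q * (q : ℝ) ^ ((1 : ℝ) / 2 - ε)) atTop (nhds 0) ∧
      ∀ q : ℕ, 2 ≤ q → ∀ a : (ZMod q)ˣ, ∀ μ : ℝ, 0 < μ → μ ≤ 1 →
        |(Nat.card {p : ℕ // 1 ≤ p ∧ (p : ℝ) ≤ μ * (q : ℝ) ^ d ∧
            ∃ x : (ZMod q)ˣ, (p : ZMod q) = ((a * x ^ d : (ZMod q)ˣ) : ZMod q)} : ℝ)
          - μ * (rdPowers d q : ℝ) * (q : ℝ) ^ (d - 1)|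
          ≤ (rdPowers d q : ℝ) * (q : ℝ) ^ (d - 1) * E q := by
  by_cases hd1 : d = 1
  · subst hd1
    refine ⟨fun q => ((({e ∈ q.divisors | Squarefree e}).card : ℝ) / (Nat.totient q : ℝ)), ?_, ?_⟩
    · exact tendsto_d1 ε hε
    · intro q hq a μ hμ0 hμ1
      haveI : NeZero q := ⟨by omega⟩
      haveI : Fact (1 < q) := ⟨by omega⟩
      have hB : (0:ℝ) ≤ μ * (q : ℝ) ^ 1 := by positivity
      set N := ⌊μ * ((q:ℝ)) ^ 1⌋₊ with hN
      set T : Finset ℕ := {p ∈ Icc 1 N | p.Coprime q} with hT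
      -- identify the cardinality
      have hiff : ∀ p : ℕ, (1 ≤ p ∧ (p : ℝ) ≤ μ * (q : ℝ) ^ 1 ∧
          ∃ x : (ZMod q)ˣ, (p : ZMod q) = ((a * x ^ 1 : (ZMod q)ˣ) : ZMod q)) ↔ p ∈ T := by
        intro p
        rw [hT, Finset.mem_filter, Finset.mem_Icc]
        constructor
        · rintro ⟨h1, h2, x, hx⟩
          refine ⟨⟨h1, (Nat.le_floor_iff hB).mpr h2⟩, ?_⟩
          have hu : IsUnit (p : ZMod q) := hx ▸ (a * x ^ 1).isUnit
          exact (ZMod.isUnit_iff_coprime p q).mp hu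
        · rintro ⟨⟨h1, h2⟩, hcop⟩
          refine ⟨h1, (Nat.le_floor_iff hB).mp h2, ?_⟩
          obtain ⟨u, hu⟩ := (ZMod.isUnit_iff_coprime p q).mpr hcop
          refine ⟨a⁻¹ * u, ?_⟩
          rw [pow_one, mul_inv_cancel_left]
          exact hu.symm
      have hcard : (Nat.card {p : ℕ // 1 ≤ p ∧ (p : ℝ) ≤ μ * (q : ℝ) ^ 1 ∧
          ∃ x : (ZMod q)ˣ, (p : ZMod q) = ((a * x ^ 1 : (ZMod q)ˣ) : ZMod q)}) = T.card := by
        rw [Nat.card_congr (Equiv.subtypeEquivRight hiff)]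
        exact Nat.card_eq_finsetCard T
      have hrd : rdPowers 1 q = Nat.totient q := by
        unfold rdPowers
        simp only [pow_one]
        have h1 : (Set.range fun x : (ZMod q)ˣ => x) = Set.univ := Set.range_id
        rw [h1, Nat.card_univ, Nat.card_eq_fintype_card, ZMod.card_units_eq_totient]
      have hφ0 : (0:ℝ) < Nat.totient q := by
        exact_mod_cast Nat.totient_pos.mpr (by omega)
      have hkey := coprime_count_error q hq μ hμ0.le hμ1
      have hNeq : ⌊μ * (q:ℝ)⌋₊ = N := by rw [hN, pow_one]
      rw [hNeq] at hkey
      rw [hcard, hrd]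
      have hpow0 : ((q:ℝ) : ℝ) ^ (1 - 1) = 1 := by norm_num
      rw [hpow0, mul_one, mul_one]
      calc |(T.card : ℝ) - μ * (Nat.totient q : ℝ)|
          ≤ (({e ∈ q.divisors | Squarefree e}).card : ℝ) := hkey
        _ = (Nat.totient q : ℝ) *
            ((({e ∈ q.divisors | Squarefree e}).card : ℝ) / (Nat.totient q : ℝ)) := by
            field_simp
  · -- d ≥ 2
    have hd2 : 2 ≤ d := by omega
    refine ⟨fun q => 2 / (q : ℝ), tendsto_d2 ε hε, ?_⟩
    intro q hq a μ hμ0 hμ1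
    haveI : NeZero q := ⟨by omega⟩
    have hqR : (0:ℝ) < q := by positivity
    have hB : (0:ℝ) ≤ μ * (q : ℝ) ^ d := by positivity
    set B := μ * (q : ℝ) ^ d with hBdef
    set T : Finset ℕ := (Icc 1 ⌊B⌋₊).filter (fun p : ℕ =>
        ∃ x : (ZMod q)ˣ, (p : ZMod q) = ((a * x ^ d : (ZMod q)ˣ) : ZMod q)) with hT
    have hiff : ∀ p : ℕ, (1 ≤ p ∧ (p : ℝ) ≤ B ∧
        ∃ x : (ZMod q)ˣ, (p : ZMod q) = ((a * x ^ d : (ZMod q)ˣ) : ZMod q)) ↔ p ∈ T := by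
      intro p
      rw [hT, Finset.mem_filter, Finset.mem_Icc]
      constructor
      · rintro ⟨h1, h2, hx⟩
        exact ⟨⟨h1, (Nat.le_floor_iff hB).mpr h2⟩, hx⟩
      · rintro ⟨⟨h1, h2⟩, hx⟩
        exact ⟨h1, (Nat.le_floor_iff hB).mp h2, hx⟩
    have hcard : (Nat.card {p : ℕ // 1 ≤ p ∧ (p : ℝ) ≤ B ∧
        ∃ x : (ZMod q)ˣ, (p : ZMod q) = ((a * x ^ d : (ZMod q)ˣ) : ZMod q)}) = T.card := by
      rw [Nat.card_congr (Equiv.subtypeEquivRight hiff)]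
      exact Nat.card_eq_finsetCard T
    have hkey := generic_count q d hq a B hB
    rw [hcard]
    have hqd : (0:ℝ) < (q:ℝ) := by exact_mod_cast (by omega : 0 < q)
    have hBq : (rdPowers d q : ℝ) * (B / q) = μ * (rdPowers d q : ℝ) * (q : ℝ) ^ (d - 1) := by
      have hd' : d - 1 + 1 = d := by omega
      rw [hBdef]
      rw [show (q:ℝ) ^ d = (q:ℝ) ^ (d - 1) * q by rw [← pow_succ, hd']]
      field_simp
    have hpow : (q:ℝ) ≤ (q:ℝ) ^ (d - 1) := by
      calc (q:ℝ) = (q:ℝ) ^ 1 := (pow_one _).symm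
        _ ≤ (q:ℝ) ^ (d - 1) := by
            apply pow_le_pow_right₀ (by exact_mod_cast (by omega : 1 ≤ q)) (by omega)
    have hrd0 : (0:ℝ) ≤ (rdPowers d q : ℝ) := by positivity
    calc |(T.card : ℝ) - μ * (rdPowers d q : ℝ) * (q : ℝ) ^ (d - 1)|
        = |(T.card : ℝ) - (rdPowers d q : ℝ) * (B / q)| := by rw [hBq]
      _ ≤ 2 * (rdPowers d q : ℝ) := hkey
      _ ≤ (rdPowers d q : ℝ) * (q : ℝ) ^ (d - 1) * (2 / q) := by
          rw [div_eq_mul_inv]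
          have h2 : (rdPowers d q : ℝ) * (q : ℝ) ^ (d - 1) * (2 * (q:ℝ)⁻¹)
              = 2 * (rdPowers d q : ℝ) * ((q : ℝ) ^ (d - 1) * (q:ℝ)⁻¹) := by ring
          rw [h2]
          have h3 : (1:ℝ) ≤ (q : ℝ) ^ (d - 1) * (q:ℝ)⁻¹ := by
            rw [← div_eq_mul_inv, le_div_iff₀ hqd, one_mul]
            exact hpow
          nlinarith [hrd0]
end
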